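/- Every point c ∈ 𝒩 \ 𝒞 violates exactly one of the eight CHSH inequalities: there is exactly one sign vector s ∈ {−1,1}⁴ with s₁₁s₁₂s₂₁s₂₂ = −1 such that s₁₁c₁₁ + s₁₂c₁₂ + s₂₁c₂₁ + s₂₂c₂₂ > 2. -/

import Mathlib

/-- The classical polytope: convex hull of the eight even sign vectors. -/
def Cpoly : Set (Fin 4 → ℝ) :=
  convexHull ℝ {e : Fin 4 → ℝ | (∀ i, e i = 1 ∨ e i = -1) ∧ e 0 * e 1 * e 2 * e 3 = 1}

/-- The no-signalling body: the cube `[-1,1]⁴`. -/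
def Ncube : Set (Fin 4 → ℝ) := {c | ∀ i, c i ∈ Set.Icc (-1 : ℝ) 1}

/-- The eight even sign vectors. -/
def vv : Fin 8 → Fin 4 → ℝ := ![![1,1,1,1], ![-1,-1,-1,-1], ![1,1,-1,-1], ![-1,-1,1,1],
      ![1,-1,1,-1], ![-1,1,-1,1], ![1,-1,-1,1], ![-1,1,1,-1]]

/-- Explicit convex weights expressing a point of the cube satisfying all CHSH
inequalities as a convex combination of the even sign vectors. -/
noncomputable def ww (x0 x1 x2 x3 : ℝ) : Fin 8 → ℝ :=
  ![(|x0 + x1 + x2 + x3| + (x0 + x1 + x2 + x3))/8,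
    (|x0 + x1 + x2 + x3| - (x0 + x1 + x2 + x3))/8,
    (|x0 + x1 - x2 - x3| + (x0 + x1 - x2 - x3))/8,
    (|x0 + x1 - x2 - x3| - (x0 + x1 - x2 - x3))/8,
    (|x0 - x1 + x2 - x3| + (x0 - x1 + x2 - x3))/8,
    (|x0 - x1 + x2 - x3| - (x0 - x1 + x2 - x3))/8,
    (4 - |x0 + x1 + x2 + x3| - |x0 + x1 - x2 - x3| - |x0 - x1 + x2 - x3| + (x0 - x1 - x2 + x3))/8,
    (4 - |x0 + x1 + x2 + x3| - |x0 + x1 - x2 - x3| - |x0 - x1 + x2 - x3| - (x0 - x1 - x2 + x3))/8]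

lemma vv_mem : ∀ i, vv i ∈
    {e : Fin 4 → ℝ | (∀ i, e i = 1 ∨ e i = -1) ∧ e 0 * e 1 * e 2 * e 3 = 1} := by
  intro i
  fin_cases i <;>
    exact ⟨by intro j; fin_cases j <;> norm_num [vv], by norm_num [vv, Matrix.cons_val_two, Matrix.cons_val_three]⟩

lemma ww_sum (x0 x1 x2 x3 : ℝ) : ∑ i, ww x0 x1 x2 x3 i = 1 := by
  simp only [ww, Fin.sum_univ_succ, Fin.sum_univ_zero, Matrix.cons_val_succ, Matrix.cons_val_zero]
  ring

lemma funext4 {f g : Fin 4 → ℝ} (h0 : f 0 = g 0) (h1 : f 1 = g 1)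
    (h2 : f 2 = g 2) (h3 : f 3 = g 3) : f = g := by
  funext j; fin_cases j <;> assumption

lemma ww_comb (x0 x1 x2 x3 : ℝ) :
    ∑ i, ww x0 x1 x2 x3 i • vv i = ![x0, x1, x2, x3] := by
  apply funext4 <;>
  rw [Finset.sum_apply] <;>
    simp only [ww, vv, Fin.sum_univ_succ, Fin.sum_univ_zero, Pi.smul_apply, smul_eq_mul,
      Matrix.cons_val_succ, Matrix.cons_val_zero, Matrix.cons_val_one, Matrix.head_cons,
      Matrix.cons_val_two, Matrix.cons_val_three, Matrix.tail_cons, Matrix.head_fin_const,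
      Fin.mk_zero, Fin.mk_one] <;>
    ring

lemma ww_nonneg (x0 x1 x2 x3 : ℝ)
    (h0a : -1 ≤ x0) (h0b : x0 ≤ 1) (h1a : -1 ≤ x1) (h1b : x1 ≤ 1)
    (h2a : -1 ≤ x2) (h2b : x2 ≤ 1) (h3a : -1 ≤ x3) (h3b : x3 ≤ 1)
    (A1 : x0 + x1 + x2 - x3 ≤ 2) (A2 : x0 + x1 - x2 + x3 ≤ 2)
    (A3 : x0 - x1 + x2 + x3 ≤ 2) (A4 : -x0 + x1 + x2 + x3 ≤ 2)
    (B1 : -(x0 + x1 + x2 - x3) ≤ 2) (B2 : -(x0 + x1 - x2 + x3) ≤ 2)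
    (B3 : -(x0 - x1 + x2 + x3) ≤ 2) (B4 : -(-x0 + x1 + x2 + x3) ≤ 2) :
    ∀ i, 0 ≤ ww x0 x1 x2 x3 i := by
  have hg0a : -(x0 + x1 + x2 + x3) ≤ |x0 + x1 + x2 + x3| := neg_le_abs _
  have hg0b : x0 + x1 + x2 + x3 ≤ |x0 + x1 + x2 + x3| := le_abs_self _
  have hg1a : -(x0 + x1 - x2 - x3) ≤ |x0 + x1 - x2 - x3| := neg_le_abs _
  have hg1b : x0 + x1 - x2 - x3 ≤ |x0 + x1 - x2 - x3| := le_abs_self _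
  have hg2a : -(x0 - x1 + x2 - x3) ≤ |x0 - x1 + x2 - x3| := neg_le_abs _
  have hg2b : x0 - x1 + x2 - x3 ≤ |x0 - x1 + x2 - x3| := le_abs_self _
  have hg3a : -(x0 - x1 - x2 + x3) ≤ |x0 - x1 - x2 + x3| := neg_le_abs _
  have hg3b : x0 - x1 - x2 + x3 ≤ |x0 - x1 - x2 + x3| := le_abs_self _
  have hsum : |x0 + x1 + x2 + x3| + |x0 + x1 - x2 - x3| + |x0 - x1 + x2 - x3|
      + |x0 - x1 - x2 + x3| ≤ 4 := by
    rcases abs_cases (x0 + x1 + x2 + x3) with ⟨u0, _⟩ | ⟨u0, _⟩ <;>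
    rcases abs_cases (x0 + x1 - x2 - x3) with ⟨u1, _⟩ | ⟨u1, _⟩ <;>
    rcases abs_cases (x0 - x1 + x2 - x3) with ⟨u2, _⟩ | ⟨u2, _⟩ <;>
    rcases abs_cases (x0 - x1 - x2 + x3) with ⟨u3, _⟩ | ⟨u3, _⟩ <;>
    rw [u0, u1, u2, u3] <;> linarith
  intro i
  fin_cases i <;> exact div_nonneg (by linarith) (by norm_num)

lemma mem_Cpoly (c : Fin 4 → ℝ)
    (h0 : c 0 ∈ Set.Icc (-1:ℝ) 1) (h1 : c 1 ∈ Set.Icc (-1:ℝ) 1)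
    (h2 : c 2 ∈ Set.Icc (-1:ℝ) 1) (h3 : c 3 ∈ Set.Icc (-1:ℝ) 1)
    (A1 : c 0 + c 1 + c 2 - c 3 ≤ 2) (A2 : c 0 + c 1 - c 2 + c 3 ≤ 2)
    (A3 : c 0 - c 1 + c 2 + c 3 ≤ 2) (A4 : -c 0 + c 1 + c 2 + c 3 ≤ 2)
    (B1 : -(c 0 + c 1 + c 2 - c 3) ≤ 2) (B2 : -(c 0 + c 1 - c 2 + c 3) ≤ 2)
    (B3 : -(c 0 - c 1 + c 2 + c 3) ≤ 2) (B4 : -(-c 0 + c 1 + c 2 + c 3) ≤ 2) :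
    c ∈ Cpoly := by
  obtain ⟨h0a, h0b⟩ := h0; obtain ⟨h1a, h1b⟩ := h1
  obtain ⟨h2a, h2b⟩ := h2; obtain ⟨h3a, h3b⟩ := h3
  have hw := ww_nonneg (c 0) (c 1) (c 2) (c 3) h0a h0b h1a h1b h2a h2b h3a h3b
    A1 A2 A3 A4 B1 B2 B3 B4
  have hcm : Finset.univ.centerMass (ww (c 0) (c 1) (c 2) (c 3)) vv = c := by
    rw [Finset.centerMass, ww_sum, inv_one, one_smul, ww_comb]
    exact funext4 rfl rfl rfl rfl
  rw [Cpoly, ← hcm]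
  exact Finset.centerMass_mem_convexHull _ (fun i _ => hw i)
    (by rw [ww_sum]; norm_num) (fun i _ => vv_mem i)

lemma uniq_aux (c s t : Fin 4 → ℝ)
    (hc : ∀ i, c i ∈ Set.Icc (-1:ℝ) 1)
    (hs1 : ∀ i, s i = 1 ∨ s i = -1) (hs2 : s 0 * s 1 * s 2 * s 3 = -1)
    (ht1 : ∀ i, t i = 1 ∨ t i = -1) (ht2 : t 0 * t 1 * t 2 * t 3 = -1)
    (hsc : 2 < ∑ i, s i * c i) (htc : 2 < ∑ i, t i * c i) : s = t := by
  have h0 := hc 0; have h1 := hc 1; have h2 := hc 2; have h3 := hc 3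
  simp only [Set.mem_Icc] at h0 h1 h2 h3
  rw [Fin.sum_univ_four] at hsc htc
  have hext : s 0 = t 0 ∧ s 1 = t 1 ∧ s 2 = t 2 ∧ s 3 = t 3 := by
    rcases hs1 0 with e0|e0 <;> rcases hs1 1 with e1|e1 <;> rcases hs1 2 with e2|e2 <;>
      rcases hs1 3 with e3|e3 <;>
      rw [e0, e1, e2, e3] at hs2 hsc <;> norm_num at hsc hs2 <;>
    rcases ht1 0 with f0|f0 <;> rcases ht1 1 with f1|f1 <;> rcases ht1 2 with f2|f2 <;>
      rcases ht1 3 with f3|f3 <;>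
      rw [f0, f1, f2, f3] at ht2 htc <;> norm_num at htc ht2 <;>
    first
      | exact ⟨e0.trans f0.symm, e1.trans f1.symm, e2.trans f2.symm, e3.trans f3.symm⟩
      | (exfalso; linarith)
  exact funext4 hext.1 hext.2.1 hext.2.2.1 hext.2.2.2

theorem stmt7 (c : Fin 4 → ℝ) (hc : c ∈ Ncube) (hnc : c ∉ Cpoly) :
    ∃! s : Fin 4 → ℝ,
      ((∀ i, s i = 1 ∨ s i = -1) ∧ s 0 * s 1 * s 2 * s 3 = -1) ∧
        2 < ∑ i, s i * c i := by
  have hex : ∃ s : Fin 4 → ℝ,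
      ((∀ i, s i = 1 ∨ s i = -1) ∧ s 0 * s 1 * s 2 * s 3 = -1) ∧ 2 < ∑ i, s i * c i := by
    by_contra h
    push_neg at h
    have A1 := h ![1,1,1,-1] ⟨by intro i; fin_cases i <;> norm_num, by norm_num [Matrix.cons_val_two, Matrix.cons_val_three]⟩
    have A2 := h ![1,1,-1,1] ⟨by intro i; fin_cases i <;> norm_num, by norm_num [Matrix.cons_val_two, Matrix.cons_val_three]⟩
    have A3 := h ![1,-1,1,1] ⟨by intro i; fin_cases i <;> norm_num, by norm_num [Matrix.cons_val_two, Matrix.cons_val_three]⟩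
    have A4 := h ![-1,1,1,1] ⟨by intro i; fin_cases i <;> norm_num, by norm_num [Matrix.cons_val_two, Matrix.cons_val_three]⟩
    have B1 := h ![-1,-1,-1,1] ⟨by intro i; fin_cases i <;> norm_num, by norm_num [Matrix.cons_val_two, Matrix.cons_val_three]⟩
    have B2 := h ![-1,-1,1,-1] ⟨by intro i; fin_cases i <;> norm_num, by norm_num [Matrix.cons_val_two, Matrix.cons_val_three]⟩
    have B3 := h ![-1,1,-1,-1] ⟨by intro i; fin_cases i <;> norm_num, by norm_num [Matrix.cons_val_two, Matrix.cons_val_three]⟩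
    have B4 := h ![1,-1,-1,-1] ⟨by intro i; fin_cases i <;> norm_num, by norm_num [Matrix.cons_val_two, Matrix.cons_val_three]⟩
    rw [Fin.sum_univ_four] at A1 A2 A3 A4 B1 B2 B3 B4
    norm_num [Matrix.cons_val_two, Matrix.cons_val_three] at A1 A2 A3 A4 B1 B2 B3 B4
    exact hnc (mem_Cpoly c (hc 0) (hc 1) (hc 2) (hc 3)
      (by linarith) (by linarith) (by linarith) (by linarith)
      (by linarith) (by linarith) (by linarith) (by linarith))
  obtain ⟨s, hs⟩ := hex
  exact ⟨s, hs, fun t ht =>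
    uniq_aux c t s (fun i => hc i) ht.1.1 ht.1.2 hs.1.1 hs.1.2 ht.2 hs.2⟩
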